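/- Let G be a group and g ∈ G. Suppose that for every natural number n there exist a natural number k ≥ n, a family of groups (H i) for i : Fin k, nontrivial elements h_i ∈ [H_i,H_i] for each i, and a group homomorphism φ : G → *_{i} H_i into the free product, such that φ(g) = ∏_{i} of(h_i) (the product, in order, of the canonical images of the h_i). Then g does not belong to the commutator subgroup [G,G]; in particular G is not a perfect group, i.e. commutator G ≠ ⊤, and the abelianization of G is nontrivial. -/

import Mathlib

open scoped commutatorElement in
/-- The commutator length of an element `g` of a group `G`: the infimum (in `ℕ∞`) of the
set of natural numbers `n` such that `g` is a product of `n` commutators. -/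
noncomputable def commutatorLength {G : Type*} [Group G] (g : G) : ℕ∞ :=
  sInf {N : ℕ∞ | ∃ n : ℕ, N = n ∧ ∃ a b : Fin n → G,
    g = (List.ofFn fun i => ⁅a i, b i⁆).prod}

open scoped commutatorElement

namespace CLAux

open Monoid Monoid.CoprodI Monoid.CoprodI.Word List

variable {ι : Type*} [LinearOrder ι]

/-- Sign of an ordered pair. -/
def sgn (a b : ι) : ℤ := if a < b then 1 else if b < a then -1 else 0

lemma sgn_bounds (a b : ι) : -1 ≤ sgn a b ∧ sgn a b ≤ 1 := by
  unfold sgn; split_ifs <;> norm_num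

lemma sgn_antisymm (a b : ι) : sgn a b + sgn b a = 0 := by
  rcases lt_trichotomy a b with h | h | h
  · simp [sgn, h, asymm h]
  · simp [sgn, h]
  · simp [sgn, h, asymm h]

/-- Sign for optional arguments. -/
def bsgn (a b : Option ι) : ℤ :=
  match a, b with
  | some a, some b => sgn a b
  | _, _ => 0

lemma bsgn_bounds (a b : Option ι) : -1 ≤ bsgn a b ∧ bsgn a b ≤ 1 := by
  cases a <;> cases b <;> simp [bsgn] <;> exact sgn_bounds _ _

lemma bsgn_some_some (a b : ι) : bsgn (some a) (some b) = sgn a b := rfl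

/-- Sum of signs of adjacent pairs in a list: the counting quasimorphism on index lists. -/
def dsum : List ι → ℤ
  | [] => 0
  | [_] => 0
  | a :: b :: t => sgn a b + dsum (b :: t)

@[simp] lemma dsum_nil : dsum ([] : List ι) = 0 := rfl
@[simp] lemma dsum_single (a : ι) : dsum [a] = 0 := rfl
lemma dsum_cons2 (a b : ι) (t : List ι) :
    dsum (a :: b :: t) = sgn a b + dsum (b :: t) := rfl

lemma dsum_cons (a : ι) (l : List ι) :
    dsum (a :: l) = bsgn (some a) l.head? + dsum l := by
  cases l <;> simp [dsum, bsgn]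

lemma dsum_append (l₁ l₂ : List ι) :
    dsum (l₁ ++ l₂) = dsum l₁ + bsgn l₁.getLast? l₂.head? + dsum l₂ := by
  induction l₁ with
  | nil => simp [bsgn]
  | cons a l ih =>
    cases l with
    | nil =>
      rw [List.singleton_append, dsum_cons, dsum_single]
      simp
    | cons b t =>
      rw [List.cons_append, List.cons_append, dsum_cons2, ← List.cons_append, ih,
        dsum_cons2, List.getLast?_cons_cons]
      ring

lemma dsum_chain_lt : ∀ l : List ι, List.Chain' (· < ·) l → l ≠ [] →
    dsum l = (l.length : ℤ) - 1
  | [] => by simp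
  | [a] => by intros; simp
  | a :: b :: t => by
    intro hch _
    obtain ⟨hab, ht⟩ := List.isChain_cons_cons.mp hch
    rw [dsum_cons2, dsum_chain_lt (b :: t) ht (by simp)]
    simp only [sgn, if_pos hab, List.length_cons]
    push_cast
    ring

section Words

variable {M : ι → Type*} [∀ i, Group (M i)] [DecidableEq ι] [∀ i, DecidableEq (M i)]

/-- The index sequence of a reduced word. -/
def idx (w : Word M) : List ι := w.toList.map Sigma.fst

lemma smul_toList_of_fstIdx_ne {i : ι} (m : M i) (hm : m ≠ 1) (w : Word M)
    (hw : w.fstIdx ≠ some i) : (of m • w).toList = ⟨i, m⟩ :: w.toList := by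
  rw [← Word.cons_eq_smul (m := m) (ls := w) (h1 := hw) (h2 := hm)]
  rfl

lemma smul_cancel {i : ι} (m n : M i) (hmn : m * n = 1) (v' : Word M)
    (h1 : v'.fstIdx ≠ some i) (h2 : n ≠ 1) :
    of m • (Word.cons n v' h1 h2) = v' := by
  rw [Word.cons_eq_smul, ← mul_smul, ← map_mul, hmn, map_one, one_smul]

lemma smul_amalg {i : ι} (m n : M i) (hmn : m * n ≠ 1) (v' : Word M)
    (h1 : v'.fstIdx ≠ some i) (h2 : n ≠ 1) :
    (of m • (Word.cons n v' h1 h2)).toList = ⟨i, m * n⟩ :: v'.toList := by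
  rw [Word.cons_eq_smul, ← mul_smul, ← map_mul]
  exact smul_toList_of_fstIdx_ne _ hmn _ h1

lemma prod_smul_toList (u : Word M) : ∀ (w : Word M),
    List.Chain' (fun a b : (Σ i, M i) => a.1 ≠ b.1) (u.toList ++ w.toList) →
    (u.prod • w).toList = u.toList ++ w.toList := by
  induction u using Word.consRecOn with
  | empty =>
    intro w _
    have : Word.prod (M := M) Word.empty = 1 := Word.prod_empty
    rw [this, one_smul]
    rfl
  | cons i m u' h1 h2 ih =>
    intro w hch
    have hch0 : List.Chain' (fun a b : (Σ i, M i) => a.1 ≠ b.1)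
        ((⟨i, m⟩ : Σ i, M i) :: (u'.toList ++ w.toList)) := hch
    have hch' := hch0.tail
    have h3 : (u'.prod • w).toList = u'.toList ++ w.toList := ih w hch'
    have h4 : (u'.prod • w).fstIdx ≠ some i := by
      rw [Word.fstIdx_ne_iff]
      intro l hl
      rw [h3] at hl
      exact fun hil => (List.isChain_cons.mp hch0).1 l hl hil
    have h5 : (Word.cons m u' h1 h2).prod = of m * u'.prod := by
      simp [Word.prod_cons]
    rw [h5, mul_smul, smul_toList_of_fstIdx_ne m h2 _ h4, h3]
    rfl

/-- Deviation of `dsum ∘ idx` from additivity. -/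
def Dv (u v : Word M) : ℤ :=
  dsum (idx (u.prod • v)) - dsum (idx u) - dsum (idx v)

/-- There is cancellation between the last letter of `u` and the first letter of `v`. -/
def cancels (u v : Word M) : Prop :=
  ∃ (i : ι) (m n : M i), u.toList.getLast? = some ⟨i, m⟩ ∧
    v.toList.head? = some ⟨i, n⟩ ∧ m * n = 1

lemma Dv_of_nil (u v : Word M) (h : u.toList = []) : Dv u v = 0 := by
  have hu : u.prod = 1 := by rw [Word.prod, h]; rfl
  unfold Dv idx
  rw [hu, one_smul, h]
  simp

theorem key (N : ℕ) : ∀ (u v : Word M), u.toList.length ≤ N →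
    (-3 ≤ Dv u v ∧ Dv u v ≤ 3) ∧ (¬ cancels u v → -1 ≤ Dv u v ∧ Dv u v ≤ 1) := by
  induction N with
  | zero =>
    intro u v h
    have h0 : u.toList = [] := List.eq_nil_of_length_eq_zero (Nat.le_zero.mp h)
    rw [Dv_of_nil u v h0]
    exact ⟨⟨by norm_num, by norm_num⟩, fun _ => ⟨by norm_num, by norm_num⟩⟩
  | succ N ih =>
    intro u v hlen
    rcases (u.toList).eq_nil_or_concat' with h0 | ⟨l', x, hu⟩
    · rw [Dv_of_nil u v h0]
      exact ⟨⟨by norm_num, by norm_num⟩, fun _ => ⟨by norm_num, by norm_num⟩⟩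
    obtain ⟨i, m⟩ := x
    have hm : m ≠ 1 := u.ne_one ⟨i, m⟩ (by
      rw [hu]; exact List.mem_append_right _ (List.mem_singleton_self _))
    have hchainu : List.Chain' (fun a b : (Σ i, M i) => a.1 ≠ b.1) (l' ++ [⟨i, m⟩]) := by
      rw [← hu]; exact u.chain_ne
    obtain ⟨hcl', -, hlast⟩ := List.isChain_append.mp hchainu
    set u' : Word M := ⟨l', fun l hl => u.ne_one l (by rw [hu]; exact List.mem_append_left _ hl),
      hcl'⟩ with hu'def
    have hu'toList : u'.toList = l' := rfl
    have hprod : u.prod = u'.prod * of m := by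
      rw [Word.prod, Word.prod, hu, hu'toList]
      simp
    have hlen' : u'.toList.length ≤ N := by
      have h1 : u.toList.length ≤ N + 1 := hlen
      rw [hu, List.length_append] at h1
      rw [hu'toList]; simp at h1; omega
    have hidxu : idx u = idx u' ++ [i] := by
      unfold idx; rw [hu, hu'toList]; simp
    have hdu : dsum (idx u) = dsum (idx u') + bsgn (idx u').getLast? (some i) := by
      rw [hidxu, dsum_append]; simp
    have hulast : u.toList.getLast? = some ⟨i, m⟩ := by
      rw [hu]; exact List.getLast?_concat
    by_cases hA : v.fstIdx ≠ some i
    · -- no interaction: the words concatenate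
      have h5 : (of m • v).toList = ⟨i, m⟩ :: v.toList := smul_toList_of_fstIdx_ne m hm v hA
      have hch : List.Chain' (fun a b : (Σ i, M i) => a.1 ≠ b.1)
          (u'.toList ++ (of m • v).toList) := by
        rw [h5, hu'toList, show l' ++ (⟨i, m⟩ : Σ i, M i) :: v.toList
          = (l' ++ [⟨i, m⟩]) ++ v.toList by simp]
        refine List.isChain_append.mpr ⟨hchainu, v.chain_ne, ?_⟩
        intro x hx y hy
        rw [List.getLast?_concat] at hx
        cases Option.mem_some_iff.mp hx
        exact fun hiy => (Word.fstIdx_ne_iff.mp hA) y hy hiy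
      have h6 : (u.prod • v).toList = (l' ++ [⟨i, m⟩]) ++ v.toList := by
        rw [hprod, mul_smul, prod_smul_toList u' _ hch, h5, hu'toList]
        simp
      have hDv : Dv u v = bsgn (some i) (idx v).head? := by
        unfold Dv
        rw [show idx (u.prod • v) = (idx u' ++ [i]) ++ idx v by
          unfold idx; rw [h6, hu'toList]; simp, ← hidxu, dsum_append, hidxu,
          List.getLast?_concat]
        ring
      have hb := bsgn_bounds (some i) (idx v).head?
      rw [hDv]
      exact ⟨⟨hb.1.trans' (by norm_num), hb.2.trans (by norm_num)⟩, fun _ => hb⟩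
    · push_neg at hA
      -- v starts with a letter of index i
      have hvne : v.toList ≠ [] := by
        intro h0
        rw [Word.fstIdx, h0] at hA
        simp at hA
      rcases hv : v.toList with _ | ⟨⟨j, n⟩, t⟩
      · exact absurd hv hvne
      have hji : j = i := by
        rw [Word.fstIdx, hv] at hA
        simpa using hA
      subst hji
      have hchainv : List.Chain' (fun a b : (Σ i, M i) => a.1 ≠ b.1)
          ((⟨j, n⟩ : Σ i, M i) :: t) := by rw [← hv]; exact v.chain_ne
      set v' : Word M := ⟨t, fun l hl => v.ne_one l (by rw [hv]; exact List.mem_cons_of_mem _ hl),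
        hchainv.tail⟩ with hv'def
      have hv'toList : v'.toList = t := rfl
      have hfst' : v'.fstIdx ≠ some j := by
        rw [Word.fstIdx_ne_iff]
        intro l hl
        rw [hv'toList] at hl
        exact fun hjl => (List.isChain_cons.mp hchainv).1 l hl hjl
      have hn : n ≠ 1 := v.ne_one ⟨j, n⟩ (by rw [hv]; exact List.mem_cons_self)
      have hvcons : v = Word.cons n v' hfst' hn := Word.ext (by rw [hv]; rfl)
      have hdv : dsum (idx v) = bsgn (some j) (idx v').head? + dsum (idx v') := by
        rw [show idx v = j :: idx v' by unfold idx; rw [hv, hv'toList]; rfl, dsum_cons]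
      by_cases hmn : m * n = 1
      · -- cancellation case
        have h7 : u.prod • v = u'.prod • v' := by
          rw [hprod, mul_smul, hvcons, smul_cancel m n hmn v' hfst' hn]
        have hD : Dv u v = Dv u' v' - bsgn (idx u').getLast? (some j)
            - bsgn (some j) (idx v').head? := by
          unfold Dv
          rw [h7, hdu, hdv]
          ring
        have IH := ih u' v' hlen'
        have hcan : cancels u v := ⟨j, m, n, hulast, by rw [hv]; rfl, hmn⟩
        refine ⟨?_, fun hnc => absurd hcan hnc⟩
        by_cases hc : cancels u' v'
        · obtain ⟨j', m', n', hL, hH, -⟩ := hc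
          have e1 : (idx u').getLast? = some j' := by
            unfold idx; rw [List.getLast?_map, hL]; rfl
          have e2 : (idx v').head? = some j' := by
            unfold idx; rw [List.head?_map, hH]; rfl
          have hanti := sgn_antisymm j' j
          rw [hD, e1, e2, bsgn_some_some, bsgn_some_some]
          exact ⟨by linarith [IH.1.1], by linarith [IH.1.2]⟩
        · have h1 := IH.2 hc
          have b1 := bsgn_bounds (idx u').getLast? (some j)
          have b2 := bsgn_bounds (some j) (idx v').head?
          rw [hD]
          exact ⟨by linarith [h1.1, b1.2, b2.2], by linarith [h1.2, b1.1, b2.1]⟩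
      · -- amalgamation case
        have h5 : (of m • v).toList = ⟨j, m * n⟩ :: t := by
          rw [hvcons]
          rw [smul_amalg m n hmn v' hfst' hn, hv'toList]
        have hch : List.Chain' (fun a b : (Σ i, M i) => a.1 ≠ b.1)
            (u'.toList ++ (of m • v).toList) := by
          rw [h5, hu'toList, show l' ++ (⟨j, m * n⟩ : Σ i, M i) :: t
            = (l' ++ [⟨j, m * n⟩]) ++ t by simp]
          refine List.isChain_append.mpr ⟨?_, hchainv.tail, ?_⟩
          · refine List.isChain_append.mpr ⟨hcl', List.isChain_singleton _, ?_⟩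
            intro x hx y hy
            cases Option.mem_some_iff.mp hy
            exact hlast x hx ⟨j, m⟩ rfl
          · intro x hx y hy
            rw [List.getLast?_concat] at hx
            cases Option.mem_some_iff.mp hx
            intro hjy
            exact (Word.fstIdx_ne_iff.mp hfst') y (by rw [hv'toList]; exact hy) hjy
        have h6 : (u.prod • v).toList = (l' ++ [⟨j, m * n⟩]) ++ t := by
          rw [hprod, mul_smul, prod_smul_toList u' _ hch, h5, hu'toList]
          simp
        have hDv : Dv u v = 0 := by
          unfold Dv
          rw [show idx (u.prod • v) = (idx u' ++ [j]) ++ idx v' by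
              unfold idx; rw [h6, hu'toList, hv'toList]; simp,
            dsum_append, hdu, hdv, List.getLast?_concat, dsum_append]
          simp only [List.head?_cons, dsum_single]
          ring
        rw [hDv]
        exact ⟨⟨by norm_num, by norm_num⟩, fun _ => ⟨by norm_num, by norm_num⟩⟩

/-- The counting quasimorphism on the free product. -/
def F (x : CoprodI M) : ℤ := dsum (idx (Word.equiv x))

lemma equiv_prod (w : Word M) : Word.equiv w.prod = w := by
  have : w.prod = Word.equiv.symm w := rfl
  rw [this, Equiv.apply_symm_apply]

lemma F_quasi (x y : CoprodI M) :
    -3 ≤ F (x * y) - F x - F y ∧ F (x * y) - F x - F y ≤ 3 := by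
  set u := Word.equiv x with hu
  set v := Word.equiv y with hv
  have hx : u.prod = x := by
    rw [show u = x • Word.empty from rfl, Word.prod_smul, Word.prod_empty, mul_one]
  have he : Word.equiv (x * y) = u.prod • v := by
    calc Word.equiv (x * y) = (x * y) • Word.empty := rfl
    _ = x • (y • Word.empty) := mul_smul x y Word.empty
    _ = x • v := rfl
    _ = u.prod • v := by rw [hx]
  have hkey := (key u.toList.length u v le_rfl).1
  unfold Dv at hkey
  have hFxy : F (x * y) = dsum (idx (u.prod • v)) := by rw [F, he]
  have hFx : F x = dsum (idx u) := rfl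
  have hFy : F y = dsum (idx v) := rfl
  rw [hFxy, hFx, hFy]
  exact hkey

lemma F_one : F (1 : CoprodI M) = 0 := by
  unfold F
  have h1 : Word.equiv (1 : CoprodI M) = Word.empty := by
    rw [show Word.equiv (1 : CoprodI M) = (1 : CoprodI M) • Word.empty from rfl, one_smul]
  rw [h1]
  rfl

lemma F_comm (a b : CoprodI M) : -12 ≤ F ⁅a, b⁆ ∧ F ⁅a, b⁆ ≤ 12 := by
  have e1 : (a * b) * (a⁻¹ * b⁻¹) = ⁅a, b⁆ := by
    rw [commutatorElement_def]; group
  have e2 : (a⁻¹ * b⁻¹) * (b * a) = 1 := by group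
  have q1 := F_quasi (a * b) (a⁻¹ * b⁻¹)
  have q2 := F_quasi (a⁻¹ * b⁻¹) (b * a)
  have q3 := F_quasi a b
  have q4 := F_quasi b a
  rw [e2, F_one] at q2
  rw [e1] at q1
  exact ⟨by linarith [q1.1, q2.2, q3.1, q4.2], by linarith [q1.2, q2.1, q3.2, q4.1]⟩

lemma F_prod_le (l : List (CoprodI M)) (hl : ∀ x ∈ l, ∃ a b : CoprodI M, x = ⁅a, b⁆) :
    -(15 * (l.length : ℤ)) ≤ F l.prod ∧ F l.prod ≤ 15 * (l.length : ℤ) := by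
  induction l with
  | nil => simp [F_one]
  | cons x t ih =>
    obtain ⟨a, b, rfl⟩ := hl x (List.mem_cons_self)
    have hc := F_comm a b
    have ht := ih fun y hy => hl y (List.mem_cons_of_mem _ hy)
    have hq := F_quasi ⁅a, b⁆ t.prod
    rw [List.prod_cons, List.length_cons]
    push_cast
    exact ⟨by linarith [hq.1, hc.1, ht.1], by linarith [hq.2, hc.2, ht.2]⟩

end Words

lemma F_target {k : ℕ} (hk : 1 ≤ k) {H : Fin k → Type} [∀ i, Group (H i)]
    [∀ i, DecidableEq (H i)] (h : ∀ i, H i) (hne : ∀ i, h i ≠ 1) :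
    F ((List.ofFn fun i => of (h i)).prod) = (k : ℤ) - 1 := by
  set w : Word H := ⟨List.ofFn (fun i => (⟨i, h i⟩ : Σ i, H i)),
    by
      intro l hl
      rw [List.mem_ofFn] at hl
      obtain ⟨i, rfl⟩ := hl
      exact hne i,
    by
      rw [List.isChain_ofFn]
      intro i hi
      simp [Fin.ext_iff]⟩ with hw
  have hwtoList : w.toList = List.ofFn (fun i => (⟨i, h i⟩ : Σ i, H i)) := rfl
  have hprod : w.prod = (List.ofFn fun i => of (h i)).prod := by
    rw [Word.prod, hwtoList, List.map_ofFn]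
    rfl
  rw [← hprod]
  have hF : F w.prod = dsum (idx w) := by rw [F, equiv_prod]
  rw [hF]
  have hidx : idx w = List.ofFn (fun i : Fin k => i) := by
    unfold idx
    rw [hwtoList, List.map_ofFn]
    rfl
  have hmono : List.Chain' (· < ·) (List.ofFn (fun i : Fin k => i)) := by
    refine List.isChain_ofFn.mpr ?_
    intro i hi
    simp [Fin.lt_def]
  have hnil : List.ofFn (fun i : Fin k => i) ≠ [] := by
    intro h0
    have := congrArg List.length h0
    simp at this
    omega
  rw [hidx, dsum_chain_lt _ hmono hnil, List.length_ofFn]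

end CLAux

/-- If for every `n` there is `k ≥ n`, groups `H i` (`i : Fin k`), nontrivial elements
`h i ∈ [H i, H i]`, and a homomorphism `φ : G → H₁ * ⋯ * H_k` with
`φ g = h₁ h₂ ⋯ h_k`, then `g ∉ [G,G]`; in particular `G` is not perfect and its
abelianization is nontrivial. -/
theorem not_mem_commutator_of_maps_to_coprodI {G : Type*} [Group G] (g : G)
    (hyp : ∀ n : ℕ, ∃ k : ℕ, n ≤ k ∧ ∃ (H : Fin k → Type) (_ : ∀ i, Group (H i))
      (h : ∀ i, H i) (φ : G →* Monoid.CoprodI H),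
        (∀ i, h i ≠ 1 ∧ h i ∈ commutator (H i)) ∧
        φ g = (List.ofFn fun i => Monoid.CoprodI.of (h i)).prod) :
    g ∉ commutator G ∧ commutator G ≠ ⊤ ∧ Nontrivial (Abelianization G) := by
  have hg : g ∉ commutator G := by
    intro hgmem
    rw [commutator_eq_closure] at hgmem
    have hgm : g ∈ Submonoid.closure (commutatorSet G ∪ (commutatorSet G)⁻¹) := by
      rw [← Subgroup.closure_toSubmonoid]
      exact hgmem
    obtain ⟨l, hl, hlprod⟩ := Submonoid.exists_list_of_mem_closure hgm
    have hcomm : ∀ x ∈ l, ∃ a b : G, x = ⁅a, b⁆ := by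
      intro x hx
      rcases hl x hx with h | h
      · obtain ⟨a, b, hab⟩ := h
        exact ⟨a, b, hab.symm⟩
      · rw [Set.mem_inv] at h
        obtain ⟨a, b, hab⟩ := h
        exact ⟨b, a, by rw [← commutatorElement_inv, hab, inv_inv]⟩
    obtain ⟨k, hk, H, hGroup, h, φ, hprop, hφ⟩ := hyp (15 * l.length + 2)
    letI := hGroup
    letI : ∀ i, DecidableEq (H i) := fun i => Classical.decEq _
    have himg : φ g = (l.map φ).prod := by rw [← hlprod, map_list_prod]
    have hbound := CLAux.F_prod_le (l.map φ) (by
      intro y hy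
      rw [List.mem_map] at hy
      obtain ⟨x, hx, rfl⟩ := hy
      obtain ⟨a, b, rfl⟩ := hcomm x hx
      exact ⟨φ a, φ b, (map_commutatorElement φ a b)⟩)
    have hval : CLAux.F ((l.map φ).prod) = (k : ℤ) - 1 := by
      rw [← himg, hφ]
      exact CLAux.F_target (by omega) h fun i => (hprop i).1
    rw [hval, List.length_map] at hbound
    have h2 := hbound.2
    omega
  refine ⟨hg, fun htop => hg (by rw [htop]; exact Subgroup.mem_top g), ?_⟩
  exact ⟨⟨Abelianization.of g, 1, fun hcon => hg ((QuotientGroup.eq_one_iff g).mp hcon)⟩⟩
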